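/- arXiv:1706.06497 — 11 statements merged into one kernel-verified Lean document; each statement's English description precedes it below -/
import Mathlib

section
/- Let G be an npeg and s ∈ Rel⁺(ℕ). Then the position operator distributes over all other constructs: s▹ε ~G ε; s▹(p q) ~G (s▹p)(s▹q); s▹(p / q) ~G (s▹p) / (s▹q); s▹(!p) ~G !(s▹p); s▹(p*) ~G (s▹p)*; s▹(r▷p) ~G r▷(s▹p); and s▹|p| ~G |s▹p|, for all parsing expressions p, q and all binary relations r on ℕ. -/
/-- Parsing expressions of an extended PEG (npeg) over non-terminals `N`
and terminals `T`. -/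
inductive Expr (N T : Type) : Type where
  | eps : Expr N T
  | term : T → Expr N T
  | nt : N → Expr N T
  | seq : Expr N T → Expr N T → Expr N T
  | choice : Expr N T → Expr N T → Expr N T
  | neg : Expr N T → Expr N T
  | star : Expr N T → Expr N T
  | ind : (ℕ → ℕ → Prop) → Expr N T → Expr N T
  | pos : (ℕ → ℕ → Prop) → Expr N T → Expr N T
  | aln : Expr N T → Expr N T

/-- An extended PEG: a production function and a start expression. -/
structure Npeg (N T : Type) where
  delta : N → Expr N T
  start : Expr N T

/-- Operation states: rest of input (terminals with their column numbers),
set of indentation baseline candidates, alignment flag. -/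
abbrev PState (T : Type) := List (T × ℕ) × Set ℕ × Bool

/-- Image of a set under a binary relation on ℕ. -/
def img (r : ℕ → ℕ → Prop) (Y : Set ℕ) : Set ℕ := {x | ∃ y ∈ Y, r y x}

/-- Inverse relation. -/
def inv (r : ℕ → ℕ → Prop) : ℕ → ℕ → Prop := fun x y => r y x

/-- `Rel⁺(ℕ)`: relations whose image of ℕ is all of ℕ. -/
def RelPlus (r : ℕ → ℕ → Prop) : Prop := img r Set.univ = Set.univ

/-- The parsing relation `G ⊢ e, t : σ ⇒ o`. -/
inductive Parse {N T : Type} (G : Npeg N T) :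
    Expr N T → (ℕ → ℕ → Prop) → PState T → Option (PState T) → Prop where
  | eps {t : ℕ → ℕ → Prop} {σ : PState T} : Parse G .eps t σ (some σ)
  | term_false {t : ℕ → ℕ → Prop} {a : T} {i : ℕ} {w' : List (T × ℕ)} {I : Set ℕ}
      (h : i ∈ img (inv t) I) :
      Parse G (.term a) t ((a, i) :: w', I, false) (some (w', I ∩ img t {i}, false))
  | term_true {t : ℕ → ℕ → Prop} {a : T} {i : ℕ} {w' : List (T × ℕ)} {I : Set ℕ}
      (h : i ∈ I) :
      Parse G (.term a) t ((a, i) :: w', I, true) (some (w', ({i} : Set ℕ), false))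
  | term_fail {t : ℕ → ℕ → Prop} {a : T} {w : List (T × ℕ)} {I : Set ℕ} {b : Bool}
      (h : ¬ ∃ i w', w = (a, i) :: w' ∧
        ((b = false ∧ i ∈ img (inv t) I) ∨ (b = true ∧ i ∈ I))) :
      Parse G (.term a) t (w, I, b) none
  | nt {t σ o} {x : N} (h : Parse G (G.delta x) t σ o) : Parse G (.nt x) t σ o
  | seq_ok {t σ σ' o p q} (h1 : Parse G p t σ (some σ')) (h2 : Parse G q t σ' o) :
      Parse G (.seq p q) t σ o
  | seq_fail {t σ p q} (h : Parse G p t σ none) : Parse G (.seq p q) t σ none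
  | choice_ok {t σ σ' p q} (h : Parse G p t σ (some σ')) :
      Parse G (.choice p q) t σ (some σ')
  | choice_snd {t σ o p q} (h1 : Parse G p t σ none) (h2 : Parse G q t σ o) :
      Parse G (.choice p q) t σ o
  | neg_ok {t σ p} (h : Parse G p t σ none) : Parse G (.neg p) t σ (some σ)
  | neg_fail {t σ σ' p} (h : Parse G p t σ (some σ')) : Parse G (.neg p) t σ none
  | star_end {t σ p} (h : Parse G p t σ none) : Parse G (.star p) t σ (some σ)
  | star_step {t σ σ' o p} (h1 : Parse G p t σ (some σ'))
      (h2 : Parse G (.star p) t σ' o) : Parse G (.star p) t σ o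
  | ind_ok {t r p} {w : List (T × ℕ)} {I : Set ℕ} {b : Bool}
      {w' : List (T × ℕ)} {I' : Set ℕ} {b' : Bool}
      (h : Parse G p t (w, img (inv r) I, b) (some (w', I', b'))) :
      Parse G (.ind r p) t (w, I, b) (some (w', I ∩ img r I', b'))
  | ind_fail {t r p} {w : List (T × ℕ)} {I : Set ℕ} {b : Bool}
      (h : Parse G p t (w, img (inv r) I, b) none) :
      Parse G (.ind r p) t (w, I, b) none
  | pos {t s σ o p} (h : Parse G p s σ o) : Parse G (.pos s p) t σ o
  | aln_ok {t p} {w : List (T × ℕ)} {I : Set ℕ} {b : Bool}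
      {w' : List (T × ℕ)} {I' : Set ℕ} {b' : Bool}
      (h : Parse G p t (w, I, true) (some (w', I', b'))) :
      Parse G (.aln p) t (w, I, b) (some (w', I', b && b'))
  | aln_fail {t p} {w : List (T × ℕ)} {I : Set ℕ} {b : Bool}
      (h : Parse G p t (w, I, true) none) :
      Parse G (.aln p) t (w, I, b) none

/-- Semantic equivalence of expressions in a grammar `G`. -/
def ExprEquiv {N T : Type} (G : Npeg N T) (p q : Expr N T) : Prop :=
  ∀ t : ℕ → ℕ → Prop, RelPlus t → ∀ (σ : PState T) (o : Option (PState T)),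
    Parse G p t σ o ↔ Parse G q t σ o


section Helpers
variable {N T : Type} {G : Npeg N T}

lemma pos_inv' {s t : ℕ → ℕ → Prop} {p : Expr N T} {σ o}
    (h : Parse G (.pos s p) t σ o) : Parse G p s σ o := by
  cases h; assumption

lemma star_fwd {s t : ℕ → ℕ → Prop} {p : Expr N T} {σ o}
    (h : Parse G (.star p) s σ o) : Parse G (.star (.pos s p)) t σ o := by
  generalize he : Expr.star p = e at h
  induction h with
  | star_end h =>
      cases he
      exact Parse.star_end (Parse.pos h)
  | star_step h1 h2 ih1 ih2 =>
      cases he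
      exact Parse.star_step (Parse.pos h1) (ih2 rfl)
  | _ => exact absurd he (by simp_all)

lemma star_bwd {s t : ℕ → ℕ → Prop} {p : Expr N T} {σ o}
    (h : Parse G (.star (.pos s p)) t σ o) : Parse G (.star p) s σ o := by
  generalize he : Expr.star (Expr.pos s p) = e at h
  induction h with
  | star_end h =>
      cases he
      exact Parse.star_end (pos_inv' h)
  | star_step h1 h2 ih1 ih2 =>
      cases he
      exact Parse.star_step (pos_inv' h1) (ih2 rfl)
  | _ => exact absurd he (by simp_all)

end Helpers

/-- Distributivity of the position operator over all other constructs. -/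
theorem pos_distributes {N T : Type} [Fintype N] [Fintype T]
    (G : Npeg N T) (s : ℕ → ℕ → Prop) (hs : RelPlus s) :
    ExprEquiv G (.pos s .eps) .eps ∧
    (∀ p q : Expr N T, ExprEquiv G (.pos s (.seq p q)) (.seq (.pos s p) (.pos s q))) ∧
    (∀ p q : Expr N T, ExprEquiv G (.pos s (.choice p q)) (.choice (.pos s p) (.pos s q))) ∧
    (∀ p : Expr N T, ExprEquiv G (.pos s (.neg p)) (.neg (.pos s p))) ∧
    (∀ p : Expr N T, ExprEquiv G (.pos s (.star p)) (.star (.pos s p))) ∧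
    (∀ (p : Expr N T) (r : ℕ → ℕ → Prop),
        ExprEquiv G (.pos s (.ind r p)) (.ind r (.pos s p))) ∧
    (∀ p : Expr N T, ExprEquiv G (.pos s (.aln p)) (.aln (.pos s p))) := by
  refine ⟨?_, ?_, ?_, ?_, ?_, ?_, ?_⟩
  · intro t ht σ o
    constructor
    · intro h
      cases pos_inv' h
      exact Parse.eps
    · intro h
      cases h
      exact Parse.pos Parse.eps
  · intro p q t ht σ o
    constructor
    · intro h
      cases pos_inv' h with
      | seq_ok hh1 hh2 => exact Parse.seq_ok (Parse.pos hh1) (Parse.pos hh2)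
      | seq_fail hh => exact Parse.seq_fail (Parse.pos hh)
    · intro h
      cases h with
      | seq_ok hh1 hh2 => exact Parse.pos (Parse.seq_ok (pos_inv' hh1) (pos_inv' hh2))
      | seq_fail hh => exact Parse.pos (Parse.seq_fail (pos_inv' hh))
  · intro p q t ht σ o
    constructor
    · intro h
      cases pos_inv' h with
      | choice_ok hh => exact Parse.choice_ok (Parse.pos hh)
      | choice_snd hhh1 hhh2 => exact Parse.choice_snd (Parse.pos hhh1) (Parse.pos hhh2)
    · intro h
      cases h with
      | choice_ok hh => exact Parse.pos (Parse.choice_ok (pos_inv' hh))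
      | choice_snd hhh1 hhh2 => exact Parse.pos (Parse.choice_snd (pos_inv' hhh1) (pos_inv' hhh2))
  · intro p t ht σ o
    constructor
    · intro h
      cases pos_inv' h with
      | neg_ok hh => exact Parse.neg_ok (Parse.pos hh)
      | neg_fail hh => exact Parse.neg_fail (Parse.pos hh)
    · intro h
      cases h with
      | neg_ok hh => exact Parse.pos (Parse.neg_ok (pos_inv' hh))
      | neg_fail hh => exact Parse.pos (Parse.neg_fail (pos_inv' hh))
  · intro p t ht σ o
    exact ⟨fun h => star_fwd (pos_inv' h), fun h => Parse.pos (star_bwd h)⟩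
  · intro p r t ht σ o
    constructor
    · intro h
      cases pos_inv' h with
      | ind_ok hh => exact Parse.ind_ok (Parse.pos hh)
      | ind_fail hh => exact Parse.ind_fail (Parse.pos hh)
    · intro h
      cases h with
      | ind_ok hh => exact Parse.pos (Parse.ind_ok (pos_inv' hh))
      | ind_fail hh => exact Parse.pos (Parse.ind_fail (pos_inv' hh))
  · intro p t ht σ o
    constructor
    · intro h
      cases pos_inv' h with
      | aln_ok hh => exact Parse.aln_ok (Parse.pos hh)
      | aln_fail hh => exact Parse.aln_fail (Parse.pos hh)
    · intro h
      cases h with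
      | aln_ok hh => exact Parse.pos (Parse.aln_ok (pos_inv' hh))
      | aln_fail hh => exact Parse.pos (Parse.aln_fail (pos_inv' hh))
end

section
/- Let G be an npeg and r ∈ Rel⁺(ℕ). Then: r▷ε ~G ε; r▷(p / q) ~G (r▷p) / (r▷q); r▷(!p) ~G !(r▷p); and r▷(s▹p) ~G s▹(r▷p), for all parsing expressions p, q and all binary relations s on ℕ. -/
theorem key_relplus {r : ℕ → ℕ → Prop} (hr : RelPlus r) (I : Set ℕ) :
    I ∩ img r (img (inv r) I) = I := by
  apply Set.Subset.antisymm Set.inter_subset_left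
  intro i hi
  refine ⟨hi, ?_⟩
  have : i ∈ img r Set.univ := by rw [hr]; trivial
  obtain ⟨y, -, hy⟩ := this
  exact ⟨y, ⟨i, hi, hy⟩, hy⟩

/-- Distributivity of indentation over ε, choice, negation and position. -/
theorem ind_distributes {N T : Type} [Fintype N] [Fintype T]
    (G : Npeg N T) (r : ℕ → ℕ → Prop) (hr : RelPlus r) :
    ExprEquiv G (.ind r .eps) .eps ∧
    (∀ p q : Expr N T, ExprEquiv G (.ind r (.choice p q)) (.choice (.ind r p) (.ind r q))) ∧
    (∀ p : Expr N T, ExprEquiv G (.ind r (.neg p)) (.neg (.ind r p))) ∧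
    (∀ (p : Expr N T) (s : ℕ → ℕ → Prop),
        ExprEquiv G (.ind r (.pos s p)) (.pos s (.ind r p))) := by
  refine ⟨?_, ?_, ?_, ?_⟩
  · -- r▷ε ~ ε
    intro t ht σ o
    obtain ⟨w, I, b⟩ := σ
    constructor
    · intro h
      cases h with
      | ind_ok h => cases h; rw [key_relplus hr]; exact .eps
      | ind_fail h => cases h
    · intro h
      cases h
      have := Parse.ind_ok (G := G) (r := r) (p := Expr.eps)
        (Parse.eps (t := t) (σ := (w, img (inv r) I, b)))
      rwa [key_relplus hr] at this
  · -- choice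
    intro p q t ht σ o
    obtain ⟨w, I, b⟩ := σ
    constructor
    · intro h
      cases h with
      | ind_ok h =>
        cases h with
        | choice_ok h => exact .choice_ok (.ind_ok h)
        | choice_snd h1 h2 => exact .choice_snd (.ind_fail h1) (.ind_ok h2)
      | ind_fail h =>
        cases h with
        | choice_snd h1 h2 => exact .choice_snd (.ind_fail h1) (.ind_fail h2)
    · intro h
      cases h with
      | choice_ok h =>
        cases h with
        | ind_ok h' => exact .ind_ok (.choice_ok h')
      | choice_snd h1 h2 =>
        cases h1 with
        | ind_fail h1' =>
          cases h2 with
          | ind_ok h2' => exact .ind_ok (.choice_snd h1' h2')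
          | ind_fail h2' => exact .ind_fail (.choice_snd h1' h2')
  · -- neg
    intro p t ht σ o
    obtain ⟨w, I, b⟩ := σ
    constructor
    · intro h
      cases h with
      | ind_ok h =>
        cases h with
        | neg_ok h' => rw [key_relplus hr]; exact .neg_ok (.ind_fail h')
      | ind_fail h =>
        cases h with
        | neg_fail h' => exact .neg_fail (.ind_ok h')
    · intro h
      cases h with
      | neg_ok h =>
        cases h with
        | ind_fail h' =>
          have := Parse.ind_ok (G := G) (r := r) (Parse.neg_ok h')
          rwa [key_relplus hr] at this
      | neg_fail h =>
        cases h with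
        | ind_ok h' => exact .ind_fail (.neg_fail h')
  · -- pos
    intro p s t ht σ o
    obtain ⟨w, I, b⟩ := σ
    constructor
    · intro h
      cases h with
      | ind_ok h => cases h with | pos h' => exact .pos (.ind_ok h')
      | ind_fail h => cases h with | pos h' => exact .pos (.ind_fail h')
    · intro h
      cases h with
      | pos h =>
        cases h with
        | ind_ok h' => exact .ind_ok (.pos h')
        | ind_fail h' => exact .ind_fail (.pos h')
end

section
/- Let G be an npeg. Then: |ε| ~G ε; |p / q| ~G |p| / |q|; |!p| ~G !|p|; and |s▹p| ~G s▹|p|, for all parsing expressions p, q and all binary relations s on ℕ. -/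
/-- Distributivity of alignment over ε, choice, negation and position. -/
theorem aln_distributes {N T : Type} [Fintype N] [Fintype T] (G : Npeg N T) :
    ExprEquiv G (.aln .eps) (.eps : Expr N T) ∧
    (∀ p q : Expr N T, ExprEquiv G (.aln (.choice p q)) (.choice (.aln p) (.aln q))) ∧
    (∀ p : Expr N T, ExprEquiv G (.aln (.neg p)) (.neg (.aln p))) ∧
    (∀ (p : Expr N T) (s : ℕ → ℕ → Prop),
        ExprEquiv G (.aln (.pos s p)) (.pos s (.aln p))) := by
  refine ⟨?_, ?_, ?_, ?_⟩
  · intro t ht σ o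
    obtain ⟨w, I, b⟩ := σ
    constructor
    · intro h
      cases h with
      | aln_ok h => cases h; simpa using (Parse.eps : Parse G .eps t (w, I, b) _)
      | aln_fail h => cases h
    · intro h
      cases h
      simpa using Parse.aln_ok (G := G) (b := b) (Parse.eps (σ := (w, I, true)))
  · intro p q t ht σ o
    obtain ⟨w, I, b⟩ := σ
    constructor
    · intro h
      cases h with
      | aln_ok h =>
        cases h with
        | choice_ok hp => exact Parse.choice_ok (Parse.aln_ok hp)
        | choice_snd hp hq => exact Parse.choice_snd (Parse.aln_fail hp) (Parse.aln_ok hq)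
      | aln_fail h =>
        cases h with
        | choice_snd hp hq => exact Parse.choice_snd (Parse.aln_fail hp) (Parse.aln_fail hq)
    · intro h
      cases h with
      | choice_ok h =>
        cases h with
        | aln_ok hp => exact Parse.aln_ok (Parse.choice_ok hp)
      | choice_snd h1 h2 =>
        cases h1 with
        | aln_fail hp =>
          cases h2 with
          | aln_ok hq => exact Parse.aln_ok (Parse.choice_snd hp hq)
          | aln_fail hq => exact Parse.aln_fail (Parse.choice_snd hp hq)
  · intro p t ht σ o
    obtain ⟨w, I, b⟩ := σ
    constructor
    · intro h
      cases h with
      | aln_ok h =>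
        cases h with
        | neg_ok hp => simpa using Parse.neg_ok (Parse.aln_fail (b := b) hp)
      | aln_fail h =>
        cases h with
        | neg_fail hp => exact Parse.neg_fail (Parse.aln_ok hp)
    · intro h
      cases h with
      | neg_ok h1 =>
        cases h1 with
        | aln_fail hp => simpa using Parse.aln_ok (b := b) (Parse.neg_ok hp)
      | neg_fail h1 =>
        cases h1 with
        | aln_ok hp => exact Parse.aln_fail (Parse.neg_fail hp)
  · intro p s t ht σ o
    obtain ⟨w, I, b⟩ := σ
    constructor
    · intro h
      cases h with
      | aln_ok h =>
        cases h with
        | pos hp => exact Parse.pos (Parse.aln_ok hp)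
      | aln_fail h =>
        cases h with
        | pos hp => exact Parse.pos (Parse.aln_fail hp)
    · intro h
      cases h with
      | pos h1 =>
        cases h1 with
        | aln_ok hp => exact Parse.aln_ok (Parse.pos hp)
        | aln_fail hp => exact Parse.aln_fail (Parse.pos hp)
end

section
/- Identity indentation law: Let G be an npeg and let id denote the identity relation on ℕ. Then id▷p ~G p for every parsing expression p. -/
lemma img_id (Y : Set ℕ) : img (fun x y => x = y) Y = Y := by
  ext x; simp [img]

lemma img_inv_id (Y : Set ℕ) : img (inv (fun x y => x = y)) Y = Y := by
  ext x
  constructor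
  · rintro ⟨y, hy, rfl⟩; exact hy
  · intro hx; exact ⟨x, hx, rfl⟩

lemma parse_shrink {N T : Type} {G : Npeg N T} {e : Expr N T}
    {t : ℕ → ℕ → Prop} {σ : PState T} {o : Option (PState T)}
    (h : Parse G e t σ o) :
    ∀ w' I' b', o = some (w', I', b') → I' ⊆ σ.2.1 := by
  induction h with
  | eps => rintro w' I' b' h; injection h with h; subst h; exact le_refl _
  | term_false h => rintro w' I' b' h; injection h with h
                    injection h with e1 h; injection h with e2 e3
                    subst e1 e2 e3; exact Set.inter_subset_left
  | term_true h => rintro w' I' b' h2; injection h2 with h2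
                   injection h2 with e1 h2; injection h2 with e2 e3
                   subst e1 e2 e3; simpa using h
  | term_fail h => intro _ _ _ h; exact absurd h (by simp)
  | nt h ih => exact ih
  | seq_ok h1 h2 ih1 ih2 =>
      rintro w' I' b' rfl
      exact (ih2 w' I' b' rfl).trans (ih1 _ _ _ rfl)
  | seq_fail h ih => intros; simp_all
  | choice_ok h ih => intros; exact ih _ _ _ ‹_›
  | choice_snd h1 h2 ih1 ih2 => exact ih2
  | neg_ok h ih => rintro w' I' b' h2; injection h2 with h2; subst h2; exact le_refl _
  | neg_fail h ih => intros; simp_all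
  | star_end h ih => rintro w' I' b' h2; injection h2 with h2; subst h2; exact le_refl _
  | star_step h1 h2 ih1 ih2 =>
      rintro w' I' b' rfl
      exact (ih2 w' I' b' rfl).trans (ih1 _ _ _ rfl)
  | ind_ok h ih => rintro w' I' b' h2; injection h2 with h2
                   injection h2 with e1 h2; injection h2 with e2 e3
                   subst e1 e2 e3; exact Set.inter_subset_left
  | ind_fail h ih => intros; simp_all
  | pos h ih => exact ih
  | aln_ok h ih => rintro w' I' b' h2; injection h2 with h2
                   injection h2 with e1 h2; injection h2 with e2 e3
                   subst e1 e2 e3; exact ih _ _ _ rfl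
  | aln_fail h ih => intros; simp_all

/-- Identity indentation law: `id▷p ~G p`. -/
theorem ind_id {N T : Type} [Fintype N] [Fintype T] (G : Npeg N T) (p : Expr N T) :
    ExprEquiv G (.ind (fun x y => x = y) p) p := by
  intro t _ σ o
  obtain ⟨w, I, b⟩ := σ
  constructor
  · intro h
    cases h with
    | ind_ok h =>
        rw [img_inv_id] at h
        have hsub := parse_shrink h _ _ _ rfl
        rw [img_id]
        rwa [Set.inter_eq_right.mpr hsub]
    | ind_fail h => rwa [img_inv_id] at h
  · intro h
    cases o with
    | none =>
        apply Parse.ind_fail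
        rwa [img_inv_id]
    | some σ' =>
        obtain ⟨w', I', b'⟩ := σ'
        have hsub : I' ⊆ I := parse_shrink h _ _ _ rfl
        have h2 : Parse G p t (w, img (inv fun x y => x = y) I, b) (some (w', I', b')) := by
          rwa [img_inv_id]
        have := Parse.ind_ok (G := G) h2
        rwa [img_id, Set.inter_eq_right.mpr hsub] at this
end

section
/- Distributivity of indentation and alignment: Let G be an npeg and r ∈ Rel⁺(ℕ). Then r▷|p| ~G |r▷p| for every parsing expression p. -/
/-- Distributivity of indentation and alignment: `r▷|p| ~G |r▷p|`. -/
theorem ind_aln_comm {N T : Type} [Fintype N] [Fintype T] (G : Npeg N T)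
    (r : ℕ → ℕ → Prop) (hr : RelPlus r) (p : Expr N T) :
    ExprEquiv G (.ind r (.aln p)) (.aln (.ind r p)) := by
  intro t _ σ o
  obtain ⟨w, I, b⟩ := σ
  constructor
  · intro h
    cases h with
    | ind_ok h =>
      cases h with
      | aln_ok h2 => exact .aln_ok (.ind_ok h2)
    | ind_fail h =>
      cases h with
      | aln_fail h2 => exact .aln_fail (.ind_fail h2)
  · intro h
    cases h with
    | aln_ok h =>
      cases h with
      | ind_ok h2 => exact .ind_ok (.aln_ok h2)
    | aln_fail h =>
      cases h with
      | ind_fail h2 => exact .ind_fail (.aln_fail h2)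
end

section
/- Idempotence of alignment: Let G be an npeg. Then ||p|| ~G |p| for every parsing expression p, i.e., applying the alignment operator twice is semantically equivalent to applying it once. -/
/-- Idempotence of alignment: `||p|| ~G |p|`. -/
theorem aln_idem {N T : Type} [Fintype N] [Fintype T] (G : Npeg N T) (p : Expr N T) :
    ExprEquiv G (.aln (.aln p)) (.aln p) := by
  intro t _ σ o
  obtain ⟨w, I, b⟩ := σ
  constructor
  · intro h
    cases h with
    | aln_ok h' =>
      cases h' with
      | aln_ok h'' =>
        have := Parse.aln_ok (G := G) (b := b) h''
        simpa using this
    | aln_fail h' =>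
      cases h' with
      | aln_fail h'' => exact Parse.aln_fail h''
  · intro h
    cases h with
    | aln_ok h' =>
      have h1 := Parse.aln_ok (G := G) (b := true) h'
      have h2 := Parse.aln_ok (G := G) (b := b) h1
      simpa using h2
    | aln_fail h' =>
      exact Parse.aln_fail (Parse.aln_fail h')
end

section
/- Let G be an npeg and p, q parsing expressions. If for all t ∈ Rel⁺(ℕ) and all states σ, σ', G ⊢ p, t : σ ⇒ ⊤(σ') implies σ' = σ (i.e., every successful parse of p consumes no input and leaves the state unchanged), then |p q| ~G |p| |q|. -/
/-- If every successful parse of `p` leaves the state unchanged, then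
`|p q| ~G |p| |q|`. -/
theorem aln_seq_of_no_consume {N T : Type} [Fintype N] [Fintype T] (G : Npeg N T)
    (p q : Expr N T)
    (hp : ∀ t : ℕ → ℕ → Prop, RelPlus t → ∀ σ σ' : PState T,
        Parse G p t σ (some σ') → σ' = σ) :
    ExprEquiv G (.aln (.seq p q)) (.seq (.aln p) (.aln q)) := by
  intro t ht σ o
  obtain ⟨w, I, b⟩ := σ
  constructor
  · intro h
    cases h with
    | aln_ok h =>
      cases h with
      | seq_ok h1 h2 =>
        have heq := hp t ht _ _ h1
        subst heq
        exact Parse.seq_ok (by simpa using Parse.aln_ok (G := G) h1) (Parse.aln_ok h2)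
    | aln_fail h =>
      cases h with
      | seq_ok h1 h2 =>
        have heq := hp t ht _ _ h1
        subst heq
        exact Parse.seq_ok (by simpa using Parse.aln_ok (G := G) h1) (Parse.aln_fail h2)
      | seq_fail h => exact Parse.seq_fail (Parse.aln_fail h)
  · intro h
    cases h with
    | seq_ok h1 h2 =>
      cases h1 with
      | aln_ok hp' =>
        have heq := hp t ht _ _ hp'
        simp only [Prod.mk.injEq] at heq
        obtain ⟨rfl, rfl, rfl⟩ := heq
        simp only [Bool.and_true] at h2
        cases h2 with
        | aln_ok hq => exact Parse.aln_ok (Parse.seq_ok hp' hq)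
        | aln_fail hq => exact Parse.aln_fail (Parse.seq_ok hp' hq)
    | seq_fail h =>
      cases h with
      | aln_fail hp' => exact Parse.aln_fail (Parse.seq_fail hp')
end

section
/- Let G be an npeg, a ∈ Σ a terminal, s ∈ Rel⁺(ℕ), and let id denote the identity relation on ℕ. Then for every input string w, every I ⊆ ℕ, and every result o: G ⊢ s▹a, id : (w, I, false) ⇒ o if and only if G ⊢ s▷a, id : (w, I, false) ⇒ o. -/
/-- Position and indentation of terminals coincide when the alignment flag
is false and the token mode is the identity relation. -/
theorem pos_eq_ind_on_terminals {N T : Type} [Fintype N] [Fintype T] (G : Npeg N T)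
    (a : T) (s : ℕ → ℕ → Prop) (hs : RelPlus s) :
    ∀ (w : List (T × ℕ)) (I : Set ℕ) (o : Option (PState T)),
      Parse G (.pos s (.term a)) (fun x y => x = y) (w, I, false) o ↔
      Parse G (.ind s (.term a)) (fun x y => x = y) (w, I, false) o := by
  intro w I o
  have hid : ∀ J : Set ℕ, img (inv (fun x y : ℕ => x = y)) J = J := by
    intro J; ext x; simp [img, inv]
  have hid2 : ∀ J : Set ℕ, img (fun x y : ℕ => x = y) J = J := by
    intro J; ext x; simp [img, eq_comm]
  constructor
  · intro h
    cases h with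
    | pos h =>
      cases h with
      | term_false hi =>
        rename_i i w'
        have hkey : I ∩ img s {i} =
            I ∩ img s (img (inv s) I ∩ img (fun x y : ℕ => x = y) {i}) := by
          rw [hid2, Set.inter_eq_right.mpr (Set.singleton_subset_iff.mpr hi)]
        rw [hkey]
        exact Parse.ind_ok (Parse.term_false (by rw [hid]; exact hi))
      | term_fail hfail =>
        refine Parse.ind_fail (Parse.term_fail ?_)
        rintro ⟨i, w', hw, hcond⟩
        refine hfail ⟨i, w', hw, ?_⟩
        rcases hcond with ⟨_, hi⟩ | ⟨hb, _⟩
        · rw [hid] at hi; exact Or.inl ⟨rfl, hi⟩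
        · exact absurd hb (by simp)
  · intro h
    cases h with
    | ind_ok h =>
      cases h with
      | term_false hi =>
        rename_i w' i
        rw [hid] at hi
        have hkey : I ∩ img s (img (inv s) I ∩ img (fun x y : ℕ => x = y) {i}) =
            I ∩ img s {i} := by
          rw [hid2, Set.inter_eq_right.mpr (Set.singleton_subset_iff.mpr hi)]
        rw [hkey]
        exact Parse.pos (Parse.term_false hi)
    | ind_fail h =>
      cases h with
      | term_fail hfail =>
        refine Parse.pos (Parse.term_fail ?_)
        rintro ⟨i, w', hw, hcond⟩
        refine hfail ⟨i, w', hw, ?_⟩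
        rcases hcond with ⟨_, hi⟩ | ⟨hb, _⟩
        · rw [hid]; exact Or.inl ⟨rfl, hi⟩
        · exact absurd hb (by simp)
end

section
/- Termination for well-formed grammars under the strict semantics: Let G be a well-formed npeg and let e be a parsing expression all of whose subexpressions are well-formed. Then for every token mode t ∈ Rel⁺(ℕ) and every state σ, there exists a result o such that G ⊢! e, t : σ ⇒ o. -/
/-- The approximation relation `G ⊨ e ⇝ n`, `n ∈ {-1,0,1}` (as integers). -/
inductive Appr {N T : Type} (G : Npeg N T) : Expr N T → ℤ → Prop where
  | eps : Appr G .eps 0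
  | term_one {a : T} : Appr G (.term a) 1
  | term_neg {a : T} : Appr G (.term a) (-1)
  | nt {x : N} {n : ℤ} (h : Appr G (G.delta x) n) : Appr G (.nt x) n
  | seq_zero {p q} (h1 : Appr G p 0) (h2 : Appr G q 0) : Appr G (.seq p q) 0
  | seq_one {p q} {n' n'' : ℤ} (h1 : Appr G p n') (h2 : Appr G q n'')
      (hn' : n' = 0 ∨ n' = 1) (hn'' : n'' = 0 ∨ n'' = 1) (h : n' = 1 ∨ n'' = 1) :
      Appr G (.seq p q) 1
  | seq_neg_right {p q} {n' : ℤ} (h1 : Appr G p n') (hn' : n' = 0 ∨ n' = 1)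
      (h2 : Appr G q (-1)) : Appr G (.seq p q) (-1)
  | seq_neg_left {p q} (h : Appr G p (-1)) : Appr G (.seq p q) (-1)
  | choice_fst {p q} {n : ℤ} (h : Appr G p n) (hn : n = 0 ∨ n = 1) :
      Appr G (.choice p q) n
  | choice_snd {p q} {n : ℤ} (h1 : Appr G p (-1)) (h2 : Appr G q n) :
      Appr G (.choice p q) n
  | neg_zero {p} (h : Appr G p (-1)) : Appr G (.neg p) 0
  | neg_neg {p} {n' : ℤ} (h : Appr G p n') (hn : n' = 0 ∨ n' = 1) :
      Appr G (.neg p) (-1)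
  | star_zero {p} (h : Appr G p (-1)) : Appr G (.star p) 0
  | star_one {p} (h1 : Appr G p (-1)) (h2 : Appr G p 1) : Appr G (.star p) 1
  | ind {r p} {n : ℤ} (h : Appr G p n) : Appr G (.ind r p) n
  | pos {s p} {n : ℤ} (h : Appr G p n) : Appr G (.pos s p) n
  | aln {p} {n : ℤ} (h : Appr G p n) : Appr G (.aln p) n

/-- Well-formed expressions of a grammar `G`. -/
inductive WF {N T : Type} (G : Npeg N T) : Expr N T → Prop where
  | eps : WF G .eps
  | term {a : T} : WF G (.term a)
  | nt {x : N} (h : WF G (G.delta x)) : WF G (.nt x)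
  | seq {p q} (h1 : WF G p) (h2 : Appr G p 0 → WF G q) : WF G (.seq p q)
  | choice {p q} (h1 : WF G p) (h2 : Appr G p (-1) → WF G q) : WF G (.choice p q)
  | neg {p} (h : WF G p) : WF G (.neg p)
  | star {p} (h0 : ¬ Appr G p 0) (h : WF G p) : WF G (.star p)
  | ind {r p} (hr : RelPlus r) (h : WF G p) : WF G (.ind r p)
  | pos {s p} (hs : RelPlus s) (h : WF G p) : WF G (.pos s p)
  | aln {p} (h : WF G p) : WF G (.aln p)

/-- `Subexpr e e'` : `e` occurs as a subexpression of `e'` (reflexively). -/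
inductive Subexpr {N T : Type} : Expr N T → Expr N T → Prop where
  | refl {e} : Subexpr e e
  | seq_l {e p q} (h : Subexpr e p) : Subexpr e (.seq p q)
  | seq_r {e p q} (h : Subexpr e q) : Subexpr e (.seq p q)
  | choice_l {e p q} (h : Subexpr e p) : Subexpr e (.choice p q)
  | choice_r {e p q} (h : Subexpr e q) : Subexpr e (.choice p q)
  | neg {e p} (h : Subexpr e p) : Subexpr e (.neg p)
  | star {e p} (h : Subexpr e p) : Subexpr e (.star p)
  | ind {e r p} (h : Subexpr e p) : Subexpr e (.ind r p)
  | pos {e s p} (h : Subexpr e p) : Subexpr e (.pos s p)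
  | aln {e p} (h : Subexpr e p) : Subexpr e (.aln p)

/-- A grammar is well-formed if every subexpression of every production
right-hand side and of the start expression is well-formed. -/
def WellFormedGrammar {N T : Type} (G : Npeg N T) : Prop :=
  (∀ (x : N) (e : Expr N T), Subexpr e (G.delta x) → WF G e) ∧
  (∀ e : Expr N T, Subexpr e G.start → WF G e)

/-- The strict semantics `G ⊢! e, t : σ ⇒ o`: as `Parse`, except for the
choice clause. -/
inductive SParse {N T : Type} (G : Npeg N T) :
    Expr N T → (ℕ → ℕ → Prop) → PState T → Option (PState T) → Prop where
  | eps {t : ℕ → ℕ → Prop} {σ : PState T} : SParse G .eps t σ (some σ)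
  | term_false {t : ℕ → ℕ → Prop} {a : T} {i : ℕ} {w' : List (T × ℕ)} {I : Set ℕ}
      (h : i ∈ img (inv t) I) :
      SParse G (.term a) t ((a, i) :: w', I, false) (some (w', I ∩ img t {i}, false))
  | term_true {t : ℕ → ℕ → Prop} {a : T} {i : ℕ} {w' : List (T × ℕ)} {I : Set ℕ}
      (h : i ∈ I) :
      SParse G (.term a) t ((a, i) :: w', I, true) (some (w', ({i} : Set ℕ), false))
  | term_fail {t : ℕ → ℕ → Prop} {a : T} {w : List (T × ℕ)} {I : Set ℕ} {b : Bool}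
      (h : ¬ ∃ i w', w = (a, i) :: w' ∧
        ((b = false ∧ i ∈ img (inv t) I) ∨ (b = true ∧ i ∈ I))) :
      SParse G (.term a) t (w, I, b) none
  | nt {t σ o} {x : N} (h : SParse G (G.delta x) t σ o) : SParse G (.nt x) t σ o
  | seq_ok {t σ σ' o p q} (h1 : SParse G p t σ (some σ')) (h2 : SParse G q t σ' o) :
      SParse G (.seq p q) t σ o
  | seq_fail {t σ p q} (h : SParse G p t σ none) : SParse G (.seq p q) t σ none
  | choice_ok {t σ σ' p q} {o' : Option (PState T)}
      (h : SParse G p t σ (some σ'))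
      (h2 : Appr G p (-1) → SParse G q t σ o') :
      SParse G (.choice p q) t σ (some σ')
  | choice_snd {t σ o p q} (h1 : SParse G p t σ none) (h2 : SParse G q t σ o) :
      SParse G (.choice p q) t σ o
  | neg_ok {t σ p} (h : SParse G p t σ none) : SParse G (.neg p) t σ (some σ)
  | neg_fail {t σ σ' p} (h : SParse G p t σ (some σ')) : SParse G (.neg p) t σ none
  | star_end {t σ p} (h : SParse G p t σ none) : SParse G (.star p) t σ (some σ)
  | star_step {t σ σ' o p} (h1 : SParse G p t σ (some σ'))
      (h2 : SParse G (.star p) t σ' o) : SParse G (.star p) t σ o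
  | ind_ok {t r p} {w : List (T × ℕ)} {I : Set ℕ} {b : Bool}
      {w' : List (T × ℕ)} {I' : Set ℕ} {b' : Bool}
      (h : SParse G p t (w, img (inv r) I, b) (some (w', I', b'))) :
      SParse G (.ind r p) t (w, I, b) (some (w', I ∩ img r I', b'))
  | ind_fail {t r p} {w : List (T × ℕ)} {I : Set ℕ} {b : Bool}
      (h : SParse G p t (w, img (inv r) I, b) none) :
      SParse G (.ind r p) t (w, I, b) none
  | pos {t s σ o p} (h : SParse G p s σ o) : SParse G (.pos s p) t σ o
  | aln_ok {t p} {w : List (T × ℕ)} {I : Set ℕ} {b : Bool}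
      {w' : List (T × ℕ)} {I' : Set ℕ} {b' : Bool}
      (h : SParse G p t (w, I, true) (some (w', I', b'))) :
      SParse G (.aln p) t (w, I, b) (some (w', I', b && b'))
  | aln_fail {t p} {w : List (T × ℕ)} {I : Set ℕ} {b : Bool}
      (h : SParse G p t (w, I, true) none) :
      SParse G (.aln p) t (w, I, b) none

/-- An expression is an atom if it is ε, a terminal, or a non-terminal. -/
def AtomExpr {N T : Type} : Expr N T → Prop
  | .eps => True
  | .term _ => True
  | .nt _ => True
  | _ => False

/-- A choice `p / q` is disjoint in `G` if parsing of `p` and of `q` cannot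
both succeed in the same input state and token mode. -/
def DisjointChoice {N T : Type} (G : Npeg N T) (p q : Expr N T) : Prop :=
  ¬ ∃ t : ℕ → ℕ → Prop, RelPlus t ∧ ∃ (σ σ₁ σ₂ : PState T),
      Parse G p t σ (some σ₁) ∧ Parse G q t σ (some σ₂)

/-- `e₀` is repetition-free, has all its choices disjoint in `G`, and has
all its negations applied to atoms. -/
def GoodExpr {N T : Type} (G : Npeg N T) (e₀ : Expr N T) : Prop :=
  ∀ e : Expr N T, Subexpr e e₀ →
    (∀ p, e ≠ Expr.star p) ∧
    (∀ p q, e = .choice p q → DisjointChoice G p q) ∧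
    (∀ p, e = .neg p → AtomExpr p)


section Aux

variable {N T : Type}

theorem subexpr_trans {a b c : Expr N T} (h1 : Subexpr a b) (h2 : Subexpr b c) :
    Subexpr a c := by
  induction h2 with
  | refl => exact h1
  | seq_l _ ih => exact .seq_l ih
  | seq_r _ ih => exact .seq_r ih
  | choice_l _ ih => exact .choice_l ih
  | choice_r _ ih => exact .choice_r ih
  | neg _ ih => exact .neg ih
  | star _ ih => exact .star ih
  | ind _ ih => exact .ind ih
  | pos _ ih => exact .pos ih
  | aln _ ih => exact .aln ih

theorem appr_star_inv {G : Npeg N T} {p : Expr N T} (h : Appr G (.star p) 0) :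
    Appr G p (-1) := by
  cases h with
  | star_zero h => exact h

theorem sparse_sound {G : Npeg N T} {e : Expr N T} {t : ℕ → ℕ → Prop}
    {σ : PState T} {o : Option (PState T)} (h : SParse G e t σ o) :
    (∀ σ', o = some σ' → σ'.1.length ≤ σ.1.length ∧
      (σ'.1.length = σ.1.length → Appr G e 0) ∧
      (σ'.1.length < σ.1.length → Appr G e 1)) ∧
    (o = none → Appr G e (-1)) := by
  induction h with
  | eps =>
      refine ⟨?_, by intro h; cases h⟩
      rintro σ' h; cases h
      exact ⟨le_rfl, fun _ => .eps, fun h => absurd h (lt_irrefl _)⟩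
  | term_false h =>
      refine ⟨?_, by intro h; cases h⟩
      rintro σ' h; cases h
      exact ⟨Nat.le_succ _, fun he => absurd he (by simp), fun _ => .term_one⟩
  | term_true h =>
      refine ⟨?_, by intro h; cases h⟩
      rintro σ' h; cases h
      exact ⟨Nat.le_succ _, fun he => absurd he (by simp), fun _ => .term_one⟩
  | term_fail h =>
      exact ⟨(by rintro σ' h; cases h), fun _ => .term_neg⟩
  | nt h ih =>
      refine ⟨?_, fun h => .nt (ih.2 h)⟩
      intro σ' h
      obtain ⟨l, e0, e1⟩ := ih.1 σ' h
      exact ⟨l, fun h => .nt (e0 h), fun h => .nt (e1 h)⟩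
  | seq_ok h1 h2 ih1 ih2 =>
      rename_i t' σ1 σ2 o' p q
      obtain ⟨l1, e1, g1⟩ := ih1.1 _ rfl
      constructor
      · intro σ'' h
        obtain ⟨l2, e2, g2⟩ := ih2.1 _ h
        refine ⟨l2.trans l1, ?_, ?_⟩
        · intro heq
          have h2' : σ''.1.length = σ2.1.length := by omega
          have h1' : σ2.1.length = σ1.1.length := by omega
          exact .seq_zero (e1 h1') (e2 h2')
        · intro hlt
          by_cases hq : σ''.1.length = σ2.1.length
          · have hplt : σ2.1.length < σ1.1.length := by omega
            exact .seq_one (g1 hplt) (e2 hq) (Or.inr rfl) (Or.inl rfl) (Or.inl rfl)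
          · have hqlt : σ''.1.length < σ2.1.length := lt_of_le_of_ne l2 hq
            by_cases hp : σ2.1.length = σ1.1.length
            · exact .seq_one (e1 hp) (g2 hqlt) (Or.inl rfl) (Or.inr rfl)
                (Or.inr rfl)
            · exact .seq_one (g1 (lt_of_le_of_ne l1 hp)) (g2 hqlt) (Or.inr rfl)
                (Or.inr rfl) (Or.inr rfl)
      · intro h
        have hq := ih2.2 h
        by_cases hp : σ2.1.length = σ1.1.length
        · exact .seq_neg_right (e1 hp) (Or.inl rfl) hq
        · exact .seq_neg_right (g1 (lt_of_le_of_ne l1 hp)) (Or.inr rfl) hq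
  | seq_fail h ih =>
      exact ⟨(by rintro σ' h; cases h), fun _ => .seq_neg_left (ih.2 rfl)⟩
  | choice_ok h h2 ih ih2 =>
      refine ⟨?_, by intro h; cases h⟩
      rintro σ'' h; cases h
      obtain ⟨l, e0, e1⟩ := ih.1 _ rfl
      exact ⟨l, fun h => .choice_fst (e0 h) (Or.inl rfl),
        fun h => .choice_fst (e1 h) (Or.inr rfl)⟩
  | choice_snd h1 h2 ih1 ih2 =>
      have hp := ih1.2 rfl
      refine ⟨?_, fun h => .choice_snd hp (ih2.2 h)⟩
      intro σ' h
      obtain ⟨l, e0, e1⟩ := ih2.1 σ' h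
      exact ⟨l, fun h => .choice_snd hp (e0 h), fun h => .choice_snd hp (e1 h)⟩
  | neg_ok h ih =>
      refine ⟨?_, by intro h; cases h⟩
      rintro σ' h; cases h
      exact ⟨le_rfl, fun _ => .neg_zero (ih.2 rfl),
        fun h => absurd h (lt_irrefl _)⟩
  | neg_fail h ih =>
      refine ⟨(by rintro σ' h; cases h), ?_⟩
      intro _
      obtain ⟨l, e0, e1⟩ := ih.1 _ rfl
      rcases lt_or_eq_of_le l with hlt | heq
      · exact .neg_neg (e1 hlt) (Or.inr rfl)
      · exact .neg_neg (e0 heq) (Or.inl rfl)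
  | star_end h ih =>
      refine ⟨?_, by intro h; cases h⟩
      rintro σ' h; cases h
      exact ⟨le_rfl, fun _ => .star_zero (ih.2 rfl),
        fun h => absurd h (lt_irrefl _)⟩
  | star_step h1 h2 ih1 ih2 =>
      rename_i t' σ1 σ2 o' p
      obtain ⟨l1, e1, g1⟩ := ih1.1 _ rfl
      refine ⟨?_, fun h => ih2.2 h⟩
      intro σ'' h
      obtain ⟨l2, e2, g2⟩ := ih2.1 _ h
      refine ⟨l2.trans l1, ?_, ?_⟩
      · intro heq
        have h2' : σ''.1.length = σ2.1.length := by omega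
        exact e2 h2'
      · intro hlt
        by_cases hq : σ''.1.length = σ2.1.length
        · have hplt : σ2.1.length < σ1.1.length := by omega
          exact .star_one (appr_star_inv (e2 hq)) (g1 hplt)
        · exact g2 (lt_of_le_of_ne l2 hq)
  | ind_ok h ih =>
      refine ⟨?_, by intro h; cases h⟩
      rintro σ' h; cases h
      obtain ⟨l, e0, e1⟩ := ih.1 _ rfl
      exact ⟨l, fun h => .ind (e0 h), fun h => .ind (e1 h)⟩
  | ind_fail h ih =>
      exact ⟨(by rintro σ' h; cases h), fun _ => .ind (ih.2 rfl)⟩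
  | pos h ih =>
      refine ⟨?_, fun h => .pos (ih.2 h)⟩
      intro σ' h
      obtain ⟨l, e0, e1⟩ := ih.1 σ' h
      exact ⟨l, fun h => .pos (e0 h), fun h => .pos (e1 h)⟩
  | aln_ok h ih =>
      refine ⟨?_, by intro h; cases h⟩
      rintro σ' h; cases h
      obtain ⟨l, e0, e1⟩ := ih.1 _ rfl
      exact ⟨l, fun h => .aln (e0 h), fun h => .aln (e1 h)⟩
  | aln_fail h ih =>
      exact ⟨(by rintro σ' h; cases h), fun _ => .aln (ih.2 rfl)⟩

theorem term_main (G : Npeg N T)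
    (hG : ∀ (x : N) (e : Expr N T), Subexpr e (G.delta x) → WF G e) :
    ∀ n : ℕ, ∀ e : Expr N T, (∀ e', Subexpr e' e → WF G e') →
      ∀ t : ℕ → ℕ → Prop, RelPlus t → ∀ σ : PState T, σ.1.length ≤ n →
        ∃ o : Option (PState T), SParse G e t σ o := by
  intro n
  induction n using Nat.strong_induction_on with
  | _ n ih =>
  have key : ∀ e : Expr N T, WF G e → (∀ e', Subexpr e' e → WF G e') →
      ∀ t : ℕ → ℕ → Prop, RelPlus t → ∀ σ : PState T, σ.1.length ≤ n →
        ∃ o : Option (PState T), SParse G e t σ o := by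
    intro e hwf
    induction hwf with
    | eps => exact fun _ _ _ σ _ => ⟨some σ, .eps⟩
    | @term a =>
        intro _ t ht σ hlen
        obtain ⟨w, I, b⟩ := σ
        match w with
        | [] =>
            refine ⟨none, .term_fail ?_⟩
            rintro ⟨i, w', hw, -⟩; cases hw
        | (a', i) :: w' =>
            by_cases ha : a' = a
            · subst ha
              cases b with
              | false =>
                  by_cases hi : i ∈ img (inv t) I
                  · exact ⟨_, .term_false hi⟩
                  · refine ⟨none, .term_fail ?_⟩
                    rintro ⟨j, w'', hw, hc⟩
                    cases hw
                    rcases hc with ⟨-, hj⟩ | ⟨hb, -⟩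
                    · exact hi hj
                    · cases hb
              | true =>
                  by_cases hi : i ∈ I
                  · exact ⟨_, .term_true hi⟩
                  · refine ⟨none, .term_fail ?_⟩
                    rintro ⟨j, w'', hw, hc⟩
                    cases hw
                    rcases hc with ⟨hb, -⟩ | ⟨-, hj⟩
                    · cases hb
                    · exact hi hj
            · refine ⟨none, .term_fail ?_⟩
              rintro ⟨j, w'', hw, -⟩
              cases hw
              exact ha rfl
    | @nt x h ihd =>
        intro _ t ht σ hlen
        obtain ⟨o, ho⟩ := ihd (hG x) t ht σ hlen
        exact ⟨o, .nt ho⟩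
    | @seq p q h1 h2 ih1 ih2 =>
        intro hall t ht σ hlen
        obtain ⟨o, hp⟩ := ih1 (fun e' hs => hall e' (.seq_l hs)) t ht σ hlen
        cases o with
        | none => exact ⟨none, .seq_fail hp⟩
        | some σ' =>
            obtain ⟨hle, he0, -⟩ := (sparse_sound hp).1 σ' rfl
            by_cases heq : σ'.1.length = σ.1.length
            · obtain ⟨o', hq⟩ := ih2 (he0 heq) (fun e' hs => hall e' (.seq_r hs))
                t ht σ' (by omega)
              exact ⟨o', .seq_ok hp hq⟩
            · have hlt : σ'.1.length < σ.1.length := lt_of_le_of_ne hle heq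
              obtain ⟨o', hq⟩ := ih (σ'.1.length) (by omega) q
                (fun e' hs => hall e' (.seq_r hs)) t ht σ' le_rfl
              exact ⟨o', .seq_ok hp hq⟩
    | @choice p q h1 h2 ih1 ih2 =>
        intro hall t ht σ hlen
        obtain ⟨o, hp⟩ := ih1 (fun e' hs => hall e' (.choice_l hs)) t ht σ hlen
        cases o with
        | none =>
            have hneg := (sparse_sound hp).2 rfl
            obtain ⟨o', hq⟩ := ih2 hneg (fun e' hs => hall e' (.choice_r hs))
              t ht σ hlen
            exact ⟨o', .choice_snd hp hq⟩
        | some σ' =>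
            by_cases hA : Appr G p (-1)
            · obtain ⟨o', hq⟩ := ih2 hA (fun e' hs => hall e' (.choice_r hs))
                t ht σ hlen
              exact ⟨some σ', .choice_ok hp (fun _ => hq)⟩
            · exact ⟨some σ', .choice_ok (o' := none) hp (fun h => absurd h hA)⟩
    | @neg p h ihp =>
        intro hall t ht σ hlen
        obtain ⟨o, hp⟩ := ihp (fun e' hs => hall e' (.neg hs)) t ht σ hlen
        cases o with
        | none => exact ⟨some σ, .neg_ok hp⟩
        | some σ' => exact ⟨none, .neg_fail hp⟩
    | @star p h0 hwfp ihp =>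
        intro hall t ht σ hlen
        obtain ⟨o, hp⟩ := ihp (fun e' hs => hall e' (.star hs)) t ht σ hlen
        cases o with
        | none => exact ⟨some σ, .star_end hp⟩
        | some σ' =>
            obtain ⟨hle, he0, -⟩ := (sparse_sound hp).1 σ' rfl
            have hlt : σ'.1.length < σ.1.length := by
              rcases lt_or_eq_of_le hle with h | h
              · exact h
              · exact absurd (he0 h) h0
            obtain ⟨o, hst⟩ := ih (σ'.1.length) (by omega) (.star p) hall
              t ht σ' le_rfl
            exact ⟨o, .star_step hp hst⟩
    | @ind r p hr hwfp ihp =>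
        intro hall t ht σ hlen
        obtain ⟨w, I, b⟩ := σ
        obtain ⟨o, hp⟩ := ihp (fun e' hs => hall e' (.ind hs)) t ht
          (w, img (inv r) I, b) hlen
        cases o with
        | none => exact ⟨none, .ind_fail hp⟩
        | some σ' =>
            obtain ⟨w', I', b'⟩ := σ'
            exact ⟨some (w', I ∩ img r I', b'), .ind_ok hp⟩
    | @pos s p hs hwfp ihp =>
        intro hall t ht σ hlen
        obtain ⟨o, hp⟩ := ihp (fun e' hs' => hall e' (.pos hs')) s hs σ hlen
        exact ⟨o, .pos hp⟩
    | @aln p hwfp ihp =>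
        intro hall t ht σ hlen
        obtain ⟨w, I, b⟩ := σ
        obtain ⟨o, hp⟩ := ihp (fun e' hs => hall e' (.aln hs)) t ht
          (w, I, true) hlen
        cases o with
        | none => exact ⟨none, .aln_fail hp⟩
        | some σ' =>
            obtain ⟨w', I', b'⟩ := σ'
            exact ⟨some (w', I', b && b'), .aln_ok hp⟩
  exact fun e hall => key e (hall e .refl) hall

end Aux

/-- Termination for well-formed grammars under the strict semantics. -/
theorem strict_terminates {N T : Type} [Fintype N] [Fintype T] (G : Npeg N T)
    (hG : WellFormedGrammar G) (e : Expr N T)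
    (he : ∀ e' : Expr N T, Subexpr e' e → WF G e') :
    ∀ t : ℕ → ℕ → Prop, RelPlus t → ∀ σ : PState T,
      ∃ o : Option (PState T), SParse G e t σ o := by
  intro t ht σ
  exact term_main G hG.1 σ.1.length e he t ht σ le_rfl
end

section
/- Let G₁ = (N, Σ, δ₁, s₁) and G₂ = (N, Σ, δ₂, s₂) be npegs over the same terminals and non-terminals. If δ₁(x) ~G₁ δ₂(x) for every x ∈ N, then for every parsing expression e, every token mode t ∈ Rel⁺(ℕ), every state σ, and every result o: G₂ ⊢ e, t : σ ⇒ o implies G₁ ⊢ e, t : σ ⇒ o. -/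
section Aux
variable {N T : Type}

/-- successful parses only consume input: the output word is a suffix. -/
lemma parse_suffix (G : Npeg N T) {e t σ o} (hp : Parse G e t σ o) :
    ∀ σ', o = some σ' → σ'.1 <:+ σ.1 := by
  induction hp with
  | eps => rintro σ' ⟨rfl⟩; exact List.suffix_refl _
  | term_false h => rintro σ' ⟨rfl⟩; exact ⟨[_], rfl⟩
  | term_true h => rintro σ' ⟨rfl⟩; exact ⟨[_], rfl⟩
  | term_fail h => rintro σ' ⟨⟩
  | nt h ih => exact ih
  | seq_ok h1 h2 ih1 ih2 =>
      rintro σ' rfl; exact (ih2 _ rfl).trans (ih1 _ rfl)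
  | seq_fail h ih => rintro σ' ⟨⟩
  | choice_ok h ih => rintro σ' ⟨rfl⟩; exact ih _ rfl
  | choice_snd h1 h2 ih1 ih2 => exact ih2
  | neg_ok h ih => rintro σ' ⟨rfl⟩; exact List.suffix_refl _
  | neg_fail h ih => rintro σ' ⟨⟩
  | star_end h ih => rintro σ' ⟨rfl⟩; exact List.suffix_refl _
  | star_step h1 h2 ih1 ih2 =>
      rintro σ' rfl; exact (ih2 _ rfl).trans (ih1 _ rfl)
  | @ind_ok t r p w I b w' I' b' h ih =>
      rintro σ' ⟨rfl⟩; exact ih (w', I', b') rfl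
  | ind_fail h ih => rintro σ' ⟨⟩
  | pos h ih => exact ih
  | @aln_ok t p w I b w' I' b' h ih =>
      rintro σ' ⟨rfl⟩; exact ih (w', I', b') rfl
  | aln_fail h ih => rintro σ' ⟨⟩

/-- the parse relation only depends on the token mode's rows at columns
occurring in the remaining input. -/
lemma parse_mode_local (G : Npeg N T) {e t σ o} (hp : Parse G e t σ o) :
    ∀ t' : ℕ → ℕ → Prop, (∀ q ∈ σ.1, ∀ y, t q.2 y ↔ t' q.2 y) →
      Parse G e t' σ o := by
  induction hp with
  | eps => exact fun _ _ => .eps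
  | @term_false t a i w' I h =>
      intro t' ha
      have hrow : ∀ y, t i y ↔ t' i y := ha (a, i) (by simp)
      have h' : i ∈ img (inv t') I := by
        simp only [img, inv, Set.mem_setOf_eq] at h ⊢
        obtain ⟨y, hy, hty⟩ := h
        exact ⟨y, hy, (hrow y).mp hty⟩
      have himg : img t {i} = img t' {i} := by
        ext x
        simp only [img, Set.mem_singleton_iff, Set.mem_setOf_eq]
        constructor
        · rintro ⟨y, hyi, hy⟩; subst hyi; exact ⟨_, rfl, (hrow x).mp hy⟩
        · rintro ⟨y, hyi, hy⟩; subst hyi; exact ⟨_, rfl, (hrow x).mpr hy⟩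
      rw [himg]
      exact .term_false h'
  | term_true h => exact fun _ _ => .term_true h
  | @term_fail t a w I b h =>
      intro t' ha
      refine .term_fail ?_
      rintro ⟨i, w', rfl, hcase⟩
      refine h ⟨i, w', rfl, ?_⟩
      have hrow : ∀ y, t i y ↔ t' i y := ha (a, i) (by simp)
      rcases hcase with ⟨hb, hi⟩ | ⟨hb, hi⟩
      · refine Or.inl ⟨hb, ?_⟩
        simp only [img, inv, Set.mem_setOf_eq] at hi ⊢
        obtain ⟨y, hy, hty⟩ := hi
        exact ⟨y, hy, (hrow y).mpr hty⟩
      · exact Or.inr ⟨hb, hi⟩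
  | nt h ih => exact fun t' ha => .nt (ih t' ha)
  | seq_ok h1 h2 ih1 ih2 =>
      intro t' ha
      refine .seq_ok (ih1 t' ha) (ih2 t' ?_)
      intro q hq y
      exact ha q ((parse_suffix G h1 _ rfl).subset hq) y
  | seq_fail h ih => exact fun t' ha => .seq_fail (ih t' ha)
  | choice_ok h ih => exact fun t' ha => .choice_ok (ih t' ha)
  | choice_snd h1 h2 ih1 ih2 =>
      exact fun t' ha => .choice_snd (ih1 t' ha) (ih2 t' ha)
  | neg_ok h ih => exact fun t' ha => .neg_ok (ih t' ha)
  | neg_fail h ih => exact fun t' ha => .neg_fail (ih t' ha)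
  | star_end h ih => exact fun t' ha => .star_end (ih t' ha)
  | star_step h1 h2 ih1 ih2 =>
      intro t' ha
      refine .star_step (ih1 t' ha) (ih2 t' ?_)
      intro q hq y
      exact ha q ((parse_suffix G h1 _ rfl).subset hq) y
  | ind_ok h ih => exact fun t' ha => .ind_ok (ih t' ha)
  | ind_fail h ih => exact fun t' ha => .ind_fail (ih t' ha)
  | pos h ih => exact fun t' ha => .pos h
  | aln_ok h ih => exact fun t' ha => .aln_ok (ih t' ha)
  | aln_fail h ih => exact fun t' ha => .aln_fail (ih t' ha)

/-- completion of a mode to a `RelPlus` mode agreeing on the columns of `w`. -/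
def completeMode (t : ℕ → ℕ → Prop) (w : List (T × ℕ)) : ℕ → ℕ → Prop :=
  fun i j => ((∃ q ∈ w, q.2 = i) ∧ t i j) ∨ ¬ (∃ q ∈ w, q.2 = i)

lemma completeMode_agree (t : ℕ → ℕ → Prop) (w : List (T × ℕ)) :
    ∀ q ∈ w, ∀ y, t q.2 y ↔ completeMode t w q.2 y := by
  intro q hq y
  have hc : ∃ q' ∈ w, q'.2 = q.2 := ⟨q, hq, rfl⟩
  simp [completeMode, hc]

lemma completeMode_relPlus (t : ℕ → ℕ → Prop) (w : List (T × ℕ)) :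
    RelPlus (completeMode t w) := by
  obtain ⟨y, hy⟩ := Infinite.exists_notMem_finset (w.map Prod.snd).toFinset
  have hy' : ¬ ∃ q ∈ w, q.2 = y := by
    rintro ⟨q, hq, rfl⟩
    exact hy (by simp [List.mem_toFinset]; exact ⟨q.1, hq⟩)
  apply Set.eq_univ_of_forall
  intro x
  exact ⟨y, Set.mem_univ _, Or.inr hy'⟩

end Aux

/-- If the productions of `G₁` and `G₂` are pointwise semantically equivalent
in `G₁`, then any parsing result in `G₂` is also obtained in `G₁`. -/
theorem parse_of_equiv_productions {N T : Type} [Fintype N] [Fintype T]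
    (G₁ G₂ : Npeg N T)
    (h : ∀ x : N, ExprEquiv G₁ (G₁.delta x) (G₂.delta x)) :
    ∀ (e : Expr N T) (t : ℕ → ℕ → Prop), RelPlus t →
      ∀ (σ : PState T) (o : Option (PState T)),
        Parse G₂ e t σ o → Parse G₁ e t σ o := by
  intro e t ht σ o hp
  clear ht
  induction hp with
  | eps => exact .eps
  | term_false hi => exact .term_false hi
  | term_true hi => exact .term_true hi
  | term_fail hi => exact .term_fail hi
  | @nt t σ o x hx ih =>
      have h1 := parse_mode_local G₁ ih (completeMode t σ.1)
        (completeMode_agree t σ.1)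
      have h2 := (h x (completeMode t σ.1) (completeMode_relPlus t σ.1) σ o).mpr h1
      exact .nt (parse_mode_local G₁ h2 t
        (fun q hq y => (completeMode_agree t σ.1 q hq y).symm))
  | seq_ok h1 h2 ih1 ih2 => exact .seq_ok ih1 ih2
  | seq_fail h1 ih1 => exact .seq_fail ih1
  | choice_ok h1 ih1 => exact .choice_ok ih1
  | choice_snd h1 h2 ih1 ih2 => exact .choice_snd ih1 ih2
  | neg_ok h1 ih1 => exact .neg_ok ih1
  | neg_fail h1 ih1 => exact .neg_fail ih1
  | star_end h1 ih1 => exact .star_end ih1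
  | star_step h1 h2 ih1 ih2 => exact .star_step ih1 ih2
  | ind_ok h1 ih1 => exact .ind_ok ih1
  | ind_fail h1 ih1 => exact .ind_fail ih1
  | pos h1 ih1 => exact .pos ih1
  | aln_ok h1 ih1 => exact .aln_ok ih1
  | aln_fail h1 ih1 => exact .aln_fail ih1
end

section
/- Closure under composition: Let (L, ∧) be a meet-semilattice with a greatest element ⊤, and let (α₁, γ₁) and (α₂, γ₂) be two pairs of self-maps of L such that, for each pair (α, γ), γ is monotone, γ(⊤) = ⊤, and x ∧ γ(y) ≤ γ(α(x) ∧ y) for all x, y ∈ L. Then: (i) for all x, z ∈ L, x ∧ γ₂(α₂(x) ∧ γ₁(z)) = x ∧ γ₂(γ₁(z)); and (ii) the pair (α₁ ∘ α₂, γ₂ ∘ γ₁) also satisfies the three conditions, i.e., γ₂ ∘ γ₁ is monotone, (γ₂ ∘ γ₁)(⊤) = ⊤, and x ∧ γ₂(γ₁(y)) ≤ γ₂(γ₁(α₁(α₂(x)) ∧ y)) for all x, y ∈ L. -/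
/-- Closure of the indentation/alignment axioms under composition. -/
theorem alpha_gamma_comp {L : Type*} [SemilatticeInf L] [OrderTop L]
    (α₁ γ₁ α₂ γ₂ : L → L)
    (h1mono : Monotone γ₁) (h1top : γ₁ ⊤ = ⊤)
    (h1ax : ∀ x y : L, x ⊓ γ₁ y ≤ γ₁ (α₁ x ⊓ y))
    (h2mono : Monotone γ₂) (h2top : γ₂ ⊤ = ⊤)
    (h2ax : ∀ x y : L, x ⊓ γ₂ y ≤ γ₂ (α₂ x ⊓ y)) :
    (∀ x z : L, x ⊓ γ₂ (α₂ x ⊓ γ₁ z) = x ⊓ γ₂ (γ₁ z)) ∧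
    (Monotone (γ₂ ∘ γ₁) ∧ (γ₂ ∘ γ₁) ⊤ = ⊤ ∧
      ∀ x y : L, x ⊓ γ₂ (γ₁ y) ≤ γ₂ (γ₁ (α₁ (α₂ x) ⊓ y))) := by
  refine ⟨fun x z => le_antisymm ?_ ?_, h2mono.comp h1mono, by simp [h1top, h2top], fun x y => ?_⟩
  · exact inf_le_inf_left x (h2mono inf_le_right)
  · exact le_inf inf_le_left (h2ax x (γ₁ z))
  · exact le_trans (h2ax x (γ₁ y)) (h2mono (h1ax (α₂ x) y))
end
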